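/- arXiv:2505.13580 — 4 statements merged into one kernel-verified Lean document; each statement's English description precedes it below -/
import Mathlib

section
/- Let J ≥ 1, let μ : Fin J → ℝ be the mean rewards of J arms, let j* be an index with μ j* = max_j μ j, and let Δmax = max_j (μ j* − μ j). Let p : Fin J → ℝ be a probability vector (p j ≥ 0, ∑_j p j = 1) with 0 < p j* ≤ 1. Then the expected single-step regret of playing an arm drawn from p satisfies μ j* − ∑_j (p j) · (μ j) ≤ Δmax · (1 − p j*) ≤ Δmax · (− Real.log (p j*)). (Paper's Proposition 2(a): the cross-entropy loss satisfies the surrogate property for the multi-armed bandits problem — the single-step regret is bounded by Δmax times the cross-entropy prediction loss −log p_{j*} of the optimal arm.) -/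
/-- Paper's Proposition 2(a): the cross-entropy loss satisfies the surrogate property for
multi-armed bandits — the single-step expected regret of playing an arm drawn from the
probability vector `p` is bounded by `Δmax · (1 − p j*) ≤ Δmax · (− log (p j*))`. -/
theorem cross_entropy_surrogate_mab
    (J : ℕ) (hJ : 1 ≤ J) (μ : Fin J → ℝ)
    (jstar : Fin J) (hstar : ∀ j, μ j ≤ μ jstar)
    (Δmax : ℝ) (hΔ : IsGreatest (Set.range fun j => μ jstar - μ j) Δmax)
    (p : Fin J → ℝ) (hp0 : ∀ j, 0 ≤ p j) (hp1 : ∑ j, p j = 1)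
    (hps : 0 < p jstar) (hps1 : p jstar ≤ 1) :
    μ jstar - ∑ j, p j * μ j ≤ Δmax * (1 - p jstar) ∧
    Δmax * (1 - p jstar) ≤ Δmax * (- Real.log (p jstar)) := by
  have hΔ0 : 0 ≤ Δmax := by
    have h := hΔ.2 ⟨jstar, rfl⟩
    simpa using h
  have hΔub : ∀ j, μ jstar - μ j ≤ Δmax := fun j => hΔ.2 ⟨j, rfl⟩
  constructor
  · have key : μ jstar - ∑ j, p j * μ j = ∑ j, p j * (μ jstar - μ j) := by
      simp [mul_sub, Finset.sum_sub_distrib, ← Finset.sum_mul, hp1]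
    rw [key]
    have h1 : ∑ j, p j * (μ jstar - μ j)
        ≤ ∑ j ∈ Finset.univ.erase jstar, p j * Δmax + p jstar * (μ jstar - μ jstar) := by
      rw [← Finset.add_sum_erase _ _ (Finset.mem_univ jstar), add_comm]
      gcongr with j hj
      · exact hp0 j
      · exact hΔub j
    simp only [sub_self, mul_zero, add_zero] at h1
    have h2 : ∑ j ∈ Finset.univ.erase jstar, p j * Δmax = (1 - p jstar) * Δmax := by
      rw [← Finset.sum_mul]
      congr 1
      have := Finset.add_sum_erase Finset.univ p (Finset.mem_univ jstar)
      rw [hp1] at this; linarith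
    rw [h2] at h1; linarith [h1]
  · have : 1 - p jstar ≤ - Real.log (p jstar) := by
      have := Real.log_le_sub_one_of_pos hps
      linarith
    exact mul_le_mul_of_nonneg_left this hΔ0
end

section
/- Let h, l ≥ 0 and let ν be a probability measure on ℝ with ∫ |x| dν(x) < ∞. Define the expected newsvendor cost C(a) = ∫ (h · max (a − x) 0 + l · max (x − a) 0) dν(x). Then C is Lipschitz on ℝ with constant max h l, i.e. |C(a) − C(b)| ≤ max h l · |a − b| for all a, b ∈ ℝ; in particular, for any a* ∈ ℝ, C(a) − C(a*) ≤ max h l · |a − a*| for every a. (Paper's Proposition 2(c), newsvendor case: the absolute loss satisfies the surrogate property for the newsvendor problem — the single-step regret is bounded by max{h,l} times the absolute prediction loss |a − a*|.) -/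
open MeasureTheory

private lemma newsv_pt (h l : ℝ) (hh : 0 ≤ h) (hl : 0 ≤ l) (a b x : ℝ) (hab : b ≤ a) :
    |(h * max (a - x) 0 + l * max (x - a) 0) -
      (h * max (b - x) 0 + l * max (x - b) 0)| ≤ max h l * |a - b| := by
  set p : ℝ := max (a - x) 0 - max (b - x) 0 with hp
  set q : ℝ := max (x - b) 0 - max (x - a) 0 with hq
  have hp0 : 0 ≤ p := by
    have : max (b - x) 0 ≤ max (a - x) 0 := max_le_max (by linarith) le_rfl
    linarith
  have hq0 : 0 ≤ q := by
    have : max (x - a) 0 ≤ max (x - b) 0 := max_le_max (by linarith) le_rfl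
    linarith
  have hp1 : p ≤ a - b := by
    have : max (a - x) 0 ≤ max (b - x) 0 + (a - b) := by
      rcases le_total (b - x) 0 with hb | hb
      · simp only [max_eq_right hb]
        exact max_le (by linarith) (by linarith)
      · simp only [max_eq_left hb]
        exact max_le (by linarith) (by linarith)
    linarith
  have hq1 : q ≤ a - b := by
    have : max (x - b) 0 ≤ max (x - a) 0 + (a - b) := by
      rcases le_total (x - a) 0 with hb | hb
      · simp only [max_eq_right hb]
        exact max_le (by linarith) (by linarith)
      · simp only [max_eq_left hb]
        exact max_le (by linarith) (by linarith)
    linarith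
  have habs : |a - b| = a - b := abs_of_nonneg (by linarith)
  have key : (h * max (a - x) 0 + l * max (x - a) 0) -
      (h * max (b - x) 0 + l * max (x - b) 0) = h * p - l * q := by
    simp only [hp, hq]; ring
  rw [key, habs, abs_le]
  constructor
  · have h1 : l * q ≤ l * (a - b) := by gcongr
    have h2 : l * (a - b) ≤ max h l * (a - b) :=
      mul_le_mul_of_nonneg_right (le_max_right _ _) (by linarith)
    nlinarith [mul_nonneg hh hp0]
  · have h1 : h * p ≤ h * (a - b) := by gcongr
    have h2 : h * (a - b) ≤ max h l * (a - b) :=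
      mul_le_mul_of_nonneg_right (le_max_left _ _) (by linarith)
    nlinarith [mul_nonneg hl hq0]

private lemma newsv_pt' (h l : ℝ) (hh : 0 ≤ h) (hl : 0 ≤ l) (a b x : ℝ) :
    |(h * max (a - x) 0 + l * max (x - a) 0) -
      (h * max (b - x) 0 + l * max (x - b) 0)| ≤ max h l * |a - b| := by
  rcases le_total b a with hab | hab
  · exact newsv_pt h l hh hl a b x hab
  · have := newsv_pt h l hh hl b a x hab
    rw [abs_sub_comm, abs_sub_comm a b]
    exact this

private lemma newsv_integrable (h l : ℝ) (hh : 0 ≤ h) (hl : 0 ≤ l)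
    (ν : Measure ℝ) [IsProbabilityMeasure ν] (hint : Integrable (fun x => |x|) ν) (a : ℝ) :
    Integrable (fun x => h * max (a - x) 0 + l * max (x - a) 0) ν := by
  have hmeas : AEStronglyMeasurable (fun x => h * max (a - x) 0 + l * max (x - a) 0) ν := by
    apply Continuous.aestronglyMeasurable
    fun_prop
  have hbound : Integrable (fun x => (h + l) * (|a| + |x|)) ν := by
    exact ((integrable_const (|a|)).add hint).const_mul _
  refine hbound.mono hmeas ?_
  filter_upwards with x
  rw [Real.norm_eq_abs, Real.norm_eq_abs]
  have h1 : max (a - x) 0 ≤ |a| + |x| := max_le (by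
      have := abs_sub_abs_le_abs_sub a x
      have := abs_sub a x
      calc a - x ≤ |a - x| := le_abs_self _
        _ ≤ |a| + |x| := abs_sub _ _) (by positivity)
  have h2 : max (x - a) 0 ≤ |a| + |x| := max_le (by
      calc x - a ≤ |x - a| := le_abs_self _
        _ ≤ |x| + |a| := abs_sub _ _
        _ = |a| + |x| := by ring) (by positivity)
  have hnn : 0 ≤ h * max (a - x) 0 + l * max (x - a) 0 := by positivity
  rw [abs_of_nonneg hnn, abs_of_nonneg (by positivity : (0:ℝ) ≤ (h + l) * (|a| + |x|))]
  nlinarith [mul_nonneg hh (le_max_right (a - x) 0), mul_nonneg hl (le_max_right (x - a) 0)]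

/-- Paper's Proposition 2(c), newsvendor case: the expected newsvendor cost
`C(a) = ∫ (h (a − x)⁺ + l (x − a)⁺) dν(x)` is `max h l`-Lipschitz; in particular the
single-step regret `C(a) − C(a*)` is bounded by `max h l · |a − a*|`. -/
theorem absolute_loss_surrogate_newsvendor
    (h l : ℝ) (hh : 0 ≤ h) (hl : 0 ≤ l)
    (ν : Measure ℝ) [IsProbabilityMeasure ν]
    (hint : Integrable (fun x => |x|) ν)
    (C : ℝ → ℝ)
    (hC : ∀ a, C a = ∫ x, (h * max (a - x) 0 + l * max (x - a) 0) ∂ν) :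
    (∀ a b : ℝ, |C a - C b| ≤ max h l * |a - b|) ∧
    ∀ astar a : ℝ, C a - C astar ≤ max h l * |a - astar| := by
  have lip : ∀ a b : ℝ, |C a - C b| ≤ max h l * |a - b| := by
    intro a b
    rw [hC a, hC b,
      ← integral_sub (newsv_integrable h l hh hl ν hint a) (newsv_integrable h l hh hl ν hint b)]
    calc |∫ x, ((h * max (a - x) 0 + l * max (x - a) 0) -
          (h * max (b - x) 0 + l * max (x - b) 0)) ∂ν|
        ≤ (max h l * |a - b|) * (ν Set.univ).toReal := by
          rw [← Real.norm_eq_abs]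
          apply norm_integral_le_of_norm_le_const
          filter_upwards with x
          rw [Real.norm_eq_abs]
          exact newsv_pt' h l hh hl a b x
      _ = max h l * |a - b| := by simp
  exact ⟨lip, fun astar a => le_trans (le_abs_self _) (lip a astar)⟩
end

section
/- Let φ(x) = (2π)^{−1/2} exp(−x²/2) be the standard Gaussian density, and let w₁ = (1,0), w₂ = (0,1) ∈ ℝ². Given an arbitrary sequence of observations O₁, O₂, … ∈ ℝ, define recursively: p₁ = 1/2, a_t = p_t • w₁ + (1 − p_t) • w₂ = (p_t, 1 − p_t), and p_{t+1} = p_t · φ(O_t − ⟨w₁, a_t⟩) / (p_t · φ(O_t − ⟨w₁, a_t⟩) + (1 − p_t) · φ(O_t − ⟨w₂, a_t⟩)). Then for every t ≥ 1, p_t = 1/2 and a_t = (1/2, 1/2); consequently, for each i ∈ {1, 2} and every horizon T ≥ 1, the cumulative regret satisfies ∑_{t=1}^T ((sup_{a ∈ [−1,1]×[−1,1]} ⟨w_i, a⟩) − ⟨w_i, a_t⟩) = T/2. (Paper's Proposition 3, linear bandits instance: the Bayes-optimal decision function Alg* under the squared loss — posterior averaging — incurs regret Ω(T) linear in the horizon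 in this two-environment linear bandit instance, for every environment.) -/
/-- Paper's Proposition 3, linear bandits instance: posterior averaging (the
Bayes-optimal decision under squared loss) keeps the posterior frozen at `1/2`, plays
`(1/2, 1/2)` forever, and incurs cumulative regret `T/2` in every environment of the
two-environment linear bandit instance with `w₁ = (1,0)`, `w₂ = (0,1)` and action
space `[−1,1] × [−1,1]`. -/
theorem posterior_averaging_linear_regret_linear_bandits
    (φ : ℝ → ℝ) (hφ : ∀ x, φ x = (Real.sqrt (2 * Real.pi))⁻¹ * Real.exp (-(x ^ 2) / 2))
    (w : Fin 2 → ℝ × ℝ) (hw0 : w 0 = (1, 0)) (hw1 : w 1 = (0, 1))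
    (inner2 : ℝ × ℝ → ℝ × ℝ → ℝ)
    (hinner : ∀ u v, inner2 u v = u.1 * v.1 + u.2 * v.2)
    (O : ℕ → ℝ) (p : ℕ → ℝ) (a : ℕ → ℝ × ℝ)
    (hp1 : p 1 = 1 / 2)
    (ha : ∀ t, 1 ≤ t → a t = (p t, 1 - p t))
    (hrec : ∀ t, 1 ≤ t →
      p (t + 1) = p t * φ (O t - inner2 (w 0) (a t)) /
        (p t * φ (O t - inner2 (w 0) (a t)) + (1 - p t) * φ (O t - inner2 (w 1) (a t)))) :
    (∀ t, 1 ≤ t → p t = 1 / 2 ∧ a t = (1 / 2, 1 / 2)) ∧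
    ∀ i : Fin 2, ∀ T : ℕ, 1 ≤ T →
      ∑ t ∈ Finset.Icc 1 T,
        (sSup ((fun x : ℝ × ℝ => inner2 (w i) x) ''
            (Set.Icc (-1 : ℝ) 1 ×ˢ Set.Icc (-1 : ℝ) 1)) - inner2 (w i) (a t))
        = (T : ℝ) / 2 := by
  have hφpos : ∀ x, 0 < φ x := by
    intro x
    rw [hφ]
    have h2π : 0 < Real.sqrt (2 * Real.pi) := Real.sqrt_pos.mpr (by positivity)
    positivity
  have hp : ∀ t, 1 ≤ t → p t = 1 / 2 := by
    intro t ht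
    induction t with
    | zero => omega
    | succ n ih =>
      rcases Nat.eq_zero_or_pos n with h0 | h0
      · subst h0; exact hp1
      · have hn : 1 ≤ n := h0
        have hpn := ih hn
        rw [hrec n hn, ha n hn, hpn, hinner, hinner, hw0, hw1]
        simp only
        norm_num
        field_simp
        rw [mul_div_assoc, div_self (hφpos ((2 * O n - 1) / 2)).ne']; norm_num
  have hmain : ∀ t, 1 ≤ t → p t = 1 / 2 ∧ a t = (1 / 2, 1 / 2) := by
    intro t ht
    refine ⟨hp t ht, ?_⟩
    rw [ha t ht, hp t ht]; norm_num
  refine ⟨hmain, ?_⟩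
  intro i T hT
  have hsup : sSup ((fun x : ℝ × ℝ => inner2 (w i) x) ''
      (Set.Icc (-1 : ℝ) 1 ×ˢ Set.Icc (-1 : ℝ) 1)) = 1 := by
    apply IsGreatest.csSup_eq
    constructor
    · refine ⟨(1, 1), by constructor <;> constructor <;> norm_num, ?_⟩
      fin_cases i <;> simp [hinner, hw0, hw1]
    · rintro y ⟨x, ⟨hx1, hx2⟩, rfl⟩
      simp only [Set.mem_Icc] at hx1 hx2
      fin_cases i <;> simp [hinner, hw0, hw1] <;> linarith [hx1.2, hx2.2]
  have hterm : ∀ t ∈ Finset.Icc 1 T, (sSup ((fun x : ℝ × ℝ => inner2 (w i) x) ''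
      (Set.Icc (-1 : ℝ) 1 ×ˢ Set.Icc (-1 : ℝ) 1)) - inner2 (w i) (a t)) = 1 / 2 := by
    intro t ht
    have ht1 : 1 ≤ t := (Finset.mem_Icc.mp ht).1
    rw [hsup, (hmain t ht1).2]
    fin_cases i <;> simp [hinner, hw0, hw1] <;> norm_num
  rw [Finset.sum_congr rfl hterm, Finset.sum_const, Nat.card_Icc]
  simp
  ring
end

section
/- Let φ(x) = (2π)^{−1/2} exp(−x²/2) be the standard Gaussian density. Consider two pricing environments with expected demand functions d₁(a) = 2 − a and d₂(a) = (4 − a)/5 and expected revenues r_i(a) = a · d_i(a). Given an arbitrary sequence of observations O₁, O₂, … ∈ ℝ, define recursively: p₁ = 1/2, a_t = p_t · 1 + (1 − p_t) · 2, and p_{t+1} = p_t · φ(O_t − d₁(a_t)) / (p_t · φ(O_t − d₁(a_t)) + (1 − p_t) · φ(O_t − d₂(a_t))). Then for every t ≥ 1, p_t = 1/2 and a_t = 3/2; consequently, for every horizon T ≥ 1, ∑_{t=1}^T ((sup_{a ∈ ℝ} r₁(a)) − r₁(a_t)) = T/4 and ∑_{t=1}^T ((sup_{a ∈ ℝ}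 r₂(a)) − r₂(a_t)) = T/20. (Paper's Proposition 3, dynamic pricing instance: posterior averaging incurs linear regret T/4 resp. T/20 in this two-environment dynamic pricing instance.) -/
lemma sup_aux (f : ℝ → ℝ) (c m : ℝ) (hle : ∀ x, f x ≤ m) (heq : f c = m) :
    (⨆ x : ℝ, f x) = m := by
  apply le_antisymm
  · exact ciSup_le hle
  · rw [← heq]; exact le_ciSup ⟨m, fun y ⟨x, hx⟩ => hx ▸ hle x⟩ c

/-- Paper's Proposition 3, dynamic pricing instance: posterior averaging keeps the
posterior frozen at `1/2`, posts the price `3/2` forever, and incurs cumulative regret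
`T/4` under the demand `d₁(a) = 2 − a` and `T/20` under the demand `d₂(a) = (4 − a)/5`. -/
theorem posterior_averaging_linear_regret_pricing
    (φ : ℝ → ℝ) (hφ : ∀ x, φ x = (Real.sqrt (2 * Real.pi))⁻¹ * Real.exp (-(x ^ 2) / 2))
    (d₁ d₂ r₁ r₂ : ℝ → ℝ)
    (hd1 : ∀ x, d₁ x = 2 - x) (hd2 : ∀ x, d₂ x = (4 - x) / 5)
    (hr1 : ∀ x, r₁ x = x * d₁ x) (hr2 : ∀ x, r₂ x = x * d₂ x)
    (O : ℕ → ℝ) (p a : ℕ → ℝ)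
    (hp1 : p 1 = 1 / 2)
    (ha : ∀ t, 1 ≤ t → a t = p t * 1 + (1 - p t) * 2)
    (hrec : ∀ t, 1 ≤ t →
      p (t + 1) = p t * φ (O t - d₁ (a t)) /
        (p t * φ (O t - d₁ (a t)) + (1 - p t) * φ (O t - d₂ (a t)))) :
    (∀ t, 1 ≤ t → p t = 1 / 2 ∧ a t = 3 / 2) ∧
    ∀ T : ℕ, 1 ≤ T →
      (∑ t ∈ Finset.Icc 1 T, ((⨆ x : ℝ, r₁ x) - r₁ (a t)) = (T : ℝ) / 4 ∧
       ∑ t ∈ Finset.Icc 1 T, ((⨆ x : ℝ, r₂ x) - r₂ (a t)) = (T : ℝ) / 20) := by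
  have hφpos : ∀ x, 0 < φ x := by
    intro x; rw [hφ]
    have h2π : 0 < Real.sqrt (2 * Real.pi) := Real.sqrt_pos.mpr (by positivity)
    positivity
  have hp : ∀ t, 1 ≤ t → p t = 1 / 2 := by
    intro t ht
    induction t with
    | zero => omega
    | succ n ih =>
      rcases Nat.lt_or_ge 1 (n + 1) with h | h
      · have hn : 1 ≤ n := by omega
        have hpn := ih hn
        have han : a n = 3 / 2 := by rw [ha n hn, hpn]; ring
        have heq : d₁ (a n) = d₂ (a n) := by rw [hd1, hd2, han]; norm_num
        rw [hrec n hn, hpn, heq]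
        have := hφpos (O n - d₂ (a n))
        field_simp
        ring
      · have : n + 1 = 1 := by omega
        rw [this]; exact hp1
  have haval : ∀ t, 1 ≤ t → a t = 3 / 2 := by
    intro t ht; rw [ha t ht, hp t ht]; ring
  refine ⟨fun t ht => ⟨hp t ht, haval t ht⟩, fun T hT => ?_⟩
  have hs1 : (⨆ x : ℝ, r₁ x) = 1 := by
    apply sup_aux r₁ 1
    · intro x; rw [hr1, hd1]; nlinarith [sq_nonneg (x - 1)]
    · rw [hr1, hd1]; norm_num
  have hs2 : (⨆ x : ℝ, r₂ x) = 4 / 5 := by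
    apply sup_aux r₂ 2
    · intro x; rw [hr2, hd2]; nlinarith [sq_nonneg (x - 2)]
    · rw [hr2, hd2]; norm_num
  have h1 : ∀ t ∈ Finset.Icc 1 T, (⨆ x : ℝ, r₁ x) - r₁ (a t) = (1 : ℝ) / 4 := by
    intro t htm
    rw [hs1, hr1, hd1, haval t (Finset.mem_Icc.mp htm).1]; norm_num
  have h2 : ∀ t ∈ Finset.Icc 1 T, (⨆ x : ℝ, r₂ x) - r₂ (a t) = (1 : ℝ) / 20 := by
    intro t htm
    rw [hs2, hr2, hd2, haval t (Finset.mem_Icc.mp htm).1]; norm_num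
  rw [Finset.sum_congr rfl h1, Finset.sum_congr rfl h2,
    Finset.sum_const, Finset.sum_const, Nat.card_Icc]
  constructor <;> · simp; ring
end
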